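/- Let b be a prime, m ≥ 1, k ∈ {1,…,m−1}, and let μ be the map of an NLT net with coefficients c_{i,j} (c_{i,i} ≢ 0 mod b). Let A ⊆ {0,1,…,b^m−1} be any set of b^k consecutive integers. Then for every s ∈ {0,1,…,b^k−1} there is exactly one n ∈ A with s/b^k ≤ μ(n) ≤ s/b^k + 1/b^k − 1/b^m; in particular, {μ(n) : n ∈ A} = {s/b^k + ζ_s : s = 0,…,b^k−1} with 0 ≤ ζ_s ≤ b^{−k} − b^{−m} for all s. -/

import Mathlib

/-- The `i`-th digit (1-based) of `n` in base `b`, with the convention that the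
`0`-th digit is `0`. -/
def nthDigit (b n i : ℕ) : ℕ := if i = 0 then 0 else n / b ^ (i - 1) % b
/-- The second-coordinate map `μ` of an NLT net with coefficient matrix `c`:
`μ(n) = Σ_{i=1}^m ((c_{i,1}e₁ + ⋯ + c_{i,i}e_i) mod b)/b^i`. -/
noncomputable def nltMap (b m : ℕ) (c : ℕ → ℕ → ℕ) (n : ℕ) : ℝ :=
  ∑ i ∈ Finset.Icc 1 m,
    (((∑ j ∈ Finset.Icc 1 i, c i j * nthDigit b n j) % b : ℕ) : ℝ) / (b : ℝ) ^ i

namespace NLTAux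

/-- The value of a digit string `d 1, …, d t` read as a base-`b` integer with
`d 1` most significant. -/
def dval (b : ℕ) (d : ℕ → ℕ) (t : ℕ) : ℕ := ∑ i ∈ Finset.Icc 1 t, d i * b ^ (t - i)

lemma dval_succ (b : ℕ) (d : ℕ → ℕ) (t : ℕ) :
    dval b d (t + 1) = dval b d t * b + d (t + 1) := by
  unfold dval
  rw [Finset.sum_Icc_succ_top (by omega), Finset.sum_mul]
  congr 1
  · refine Finset.sum_congr rfl fun i hi => ?_
    simp only [Finset.mem_Icc] at hi
    have h : t + 1 - i = (t - i) + 1 := by omega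
    rw [h, pow_succ, mul_assoc]
  · simp

lemma dval_lt (b : ℕ) (hb : 1 ≤ b) (d : ℕ → ℕ) :
    ∀ t, (∀ i, 1 ≤ i → i ≤ t → d i < b) → dval b d t < b ^ t := by
  intro t
  induction t with
  | zero => intro _; simp [dval]
  | succ t ih =>
    intro hd
    rw [dval_succ]
    have h1 : dval b d t < b ^ t := ih fun i h1 h2 => hd i h1 (by omega)
    have h2 : d (t + 1) < b := hd (t + 1) (by omega) le_rfl
    have h3 : dval b d t * b + b ≤ b ^ t * b := by
      have := Nat.succ_le_of_lt h1
      calc dval b d t * b + b = (dval b d t + 1) * b := by ring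
        _ ≤ b ^ t * b := Nat.mul_le_mul_right _ this
    calc dval b d t * b + d (t + 1) < dval b d t * b + b := by omega
      _ ≤ b ^ t * b := h3
      _ = b ^ (t + 1) := (pow_succ b t).symm

lemma dval_div (b : ℕ) (hb : 1 ≤ b) (d : ℕ → ℕ) (k : ℕ) :
    ∀ m, k ≤ m → (∀ i, k < i → i ≤ m → d i < b) →
      dval b d m / b ^ (m - k) = dval b d k := by
  intro m
  induction m with
  | zero => intro hk _; interval_cases k; simp
  | succ m ih =>
    intro hk hd
    rcases Nat.eq_or_lt_of_le hk with h | h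
    · subst h; simp
    · have hkm : k ≤ m := by omega
      have h1 : m + 1 - k = (m - k) + 1 := by omega
      rw [h1, pow_succ', ← Nat.div_div_eq_div_mul, dval_succ]
      have h2 : (dval b d m * b + d (m + 1)) / b = dval b d m := by
        rw [mul_comm, Nat.mul_add_div (by omega), Nat.div_eq_of_lt (hd (m+1) (by omega) le_rfl), add_zero]
      rw [h2]
      exact ih hkm fun i hi1 hi2 => hd i hi1 (by omega)

lemma dval_inj (b : ℕ) (d d' : ℕ → ℕ) :
    ∀ t, (∀ i, 1 ≤ i → i ≤ t → d i < b) → (∀ i, 1 ≤ i → i ≤ t → d' i < b) →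
      dval b d t = dval b d' t → ∀ i, 1 ≤ i → i ≤ t → d i = d' i := by
  intro t
  induction t with
  | zero => intro _ _ _ i h1 h2; omega
  | succ t ih =>
    intro hd hd' heq i h1 h2
    rw [dval_succ, dval_succ] at heq
    have hb1 : d (t + 1) < b := hd (t+1) (by omega) le_rfl
    have hb2 : d' (t + 1) < b := hd' (t+1) (by omega) le_rfl
    have key : d (t + 1) = d' (t + 1) ∧ dval b d t = dval b d' t := by
      have h3 : d (t+1) = d' (t+1) := by
        have h4 : (dval b d t * b + d (t+1)) % b = (dval b d' t * b + d' (t+1)) % b := by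
          rw [heq]
        rwa [add_comm (dval b d t * b), add_comm (dval b d' t * b),
          Nat.add_mul_mod_self_right, Nat.add_mul_mod_self_right,
          Nat.mod_eq_of_lt hb1, Nat.mod_eq_of_lt hb2] at h4
      refine ⟨h3, ?_⟩
      have hb0 : 0 < b := by omega
      have : dval b d t * b = dval b d' t * b := by omega
      exact Nat.eq_of_mul_eq_mul_right hb0 this
    rcases Nat.eq_or_lt_of_le h2 with h | h
    · rw [h]; exact key.1
    · exact ih (fun i a a' => hd i a (by omega)) (fun i a a' => hd' i a (by omega))
        key.2 i h1 (by omega)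

lemma digit_recon (b : ℕ) (hb : 1 ≤ b) :
    ∀ k r, r < b ^ k → ∑ i ∈ Finset.range k, (r / b ^ i % b) * b ^ i = r := by
  intro k
  induction k with
  | zero => intro r hr; simp only [pow_zero, Nat.lt_one_iff] at hr; subst hr; simp
  | succ k ih =>
    intro r hr
    rw [Finset.sum_range_succ']
    have h2 : r / b < b ^ k := by
      rw [Nat.div_lt_iff_lt_mul (by omega)]
      calc r < b ^ (k+1) := hr
        _ = b ^ k * b := pow_succ b k
    calc ∑ i ∈ Finset.range k, (r / b ^ (i+1) % b) * b ^ (i+1) + (r / b ^ 0 % b) * b ^ 0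
        = (∑ i ∈ Finset.range k, ((r / b) / b ^ i % b) * b ^ i) * b + r % b := by
          rw [Finset.sum_mul]
          congr 1
          · refine Finset.sum_congr rfl fun i _ => ?_
            rw [show r / b ^ (i+1) = r / b / b ^ i from by
              rw [Nat.div_div_eq_div_mul, ← pow_succ'], pow_succ, ← mul_assoc]
          · simp
      _ = (r / b) * b + r % b := by rw [ih _ h2]
      _ = r := by rw [mul_comm]; exact Nat.div_add_mod r b

lemma nthDigit_mod (b k n : ℕ) (hb : 1 ≤ b) :
    ∀ j, 1 ≤ j → j ≤ k → nthDigit b (n % b ^ k) j = nthDigit b n j := by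
  intro j h1 h2
  unfold nthDigit
  rw [if_neg (by omega), if_neg (by omega)]
  have h3 : b ^ k = b ^ (j-1) * b ^ (k - (j-1)) := by
    rw [← pow_add]; congr 1; omega
  rw [h3, Nat.mod_mul_right_div_self, Nat.mod_mod_of_dvd]
  exact dvd_pow_self b (by omega)

/-- The `i`-th digit of `μ(n)`. -/
def Y (b : ℕ) (c : ℕ → ℕ → ℕ) (n i : ℕ) : ℕ :=
  (∑ j ∈ Finset.Icc 1 i, c i j * nthDigit b n j) % b

lemma nltMap_eq (b m : ℕ) (hb : 1 ≤ b) (c : ℕ → ℕ → ℕ) (n : ℕ) :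
    nltMap b m c n = (dval b (Y b c n) m : ℝ) / (b : ℝ) ^ m := by
  have hb0 : (0:ℝ) < (b:ℝ) := by exact_mod_cast Nat.lt_of_lt_of_le Nat.zero_lt_one hb
  unfold nltMap dval Y
  push_cast
  rw [Finset.sum_div]
  refine Finset.sum_congr rfl fun i hi => ?_
  simp only [Finset.mem_Icc] at hi
  have h1 : (b:ℝ) ^ m = (b:ℝ) ^ i * (b:ℝ) ^ (m - i) := by
    rw [← pow_add]; congr 1; omega
  rw [h1, ← mul_div_mul_right _ _ (pow_ne_zero (m-i) (ne_of_gt hb0))]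


lemma nthDigit_lt (b n i : ℕ) (hb : 1 ≤ b) : nthDigit b n i < b := by
  unfold nthDigit
  split
  · omega
  · exact Nat.mod_lt _ (by omega)

lemma head_inj (b k : ℕ) (hb : Nat.Prime b) (c : ℕ → ℕ → ℕ)
    (hc : ∀ i j, c i j < b) (hdiag : ∀ i, 1 ≤ i → i ≤ k → c i i ≠ 0)
    (r r' : ℕ) (hr : r < b ^ k) (hr' : r' < b ^ k)
    (h : dval b (Y b c r) k = dval b (Y b c r') k) : r = r' := by
  haveI := Fact.mk hb
  haveI : NeZero b := ⟨hb.ne_zero⟩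
  have hb1 : 1 ≤ b := hb.one_lt.le
  have hY : ∀ n i, Y b c n i < b := fun n i => Nat.mod_lt _ hb.pos
  have hYeq : ∀ i, 1 ≤ i → i ≤ k → Y b c r i = Y b c r' i :=
    dval_inj b _ _ k (fun i h1 h2 => hY r i) (fun i h1 h2 => hY r' i) h
  have digs : ∀ i, i ≤ k → 1 ≤ i → nthDigit b r i = nthDigit b r' i := by
    intro i
    induction i using Nat.strong_induction_on with
    | _ i ih =>
      intro hik hi1
      have hy := hYeq i hi1 hik
      have hz : ((∑ j ∈ Finset.Icc 1 i, c i j * nthDigit b r j : ℕ) : ZMod b)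
          = ((∑ j ∈ Finset.Icc 1 i, c i j * nthDigit b r' j : ℕ) : ZMod b) := by
        have h1 := congrArg (Nat.cast : ℕ → ZMod b) hy
        unfold Y at h1
        rwa [ZMod.natCast_mod, ZMod.natCast_mod] at h1
      push_cast at hz
      obtain ⟨i', rfl⟩ : ∃ i', i = i' + 1 := ⟨i - 1, by omega⟩
      rw [Finset.sum_Icc_succ_top (by omega), Finset.sum_Icc_succ_top (by omega)] at hz
      have hsum : (∑ j ∈ Finset.Icc 1 i', (c (i'+1) j : ZMod b) * (nthDigit b r j : ℕ))
          = ∑ j ∈ Finset.Icc 1 i', (c (i'+1) j : ZMod b) * (nthDigit b r' j : ℕ) := by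
        refine Finset.sum_congr rfl fun j hj => ?_
        simp only [Finset.mem_Icc] at hj
        rw [ih j (by omega) (by omega) hj.1]
      rw [hsum] at hz
      have hz2 : (c (i'+1) (i'+1) : ZMod b) * (nthDigit b r (i'+1) : ℕ)
          = (c (i'+1) (i'+1) : ZMod b) * (nthDigit b r' (i'+1) : ℕ) := by
        exact add_left_cancel hz
      have hcc : (c (i'+1) (i'+1) : ZMod b) ≠ 0 := by
        rw [Ne, ZMod.natCast_eq_zero_iff]
        intro hdvd
        have h4 := hdiag (i'+1) (by omega) hik
        have h5 := hc (i'+1) (i'+1)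
        have := Nat.le_of_dvd (by omega) hdvd
        omega
      have hz3 := mul_left_cancel₀ hcc hz2
      have h6 : nthDigit b r (i'+1) < b := nthDigit_lt b r _ hb1
      have h7 : nthDigit b r' (i'+1) < b := nthDigit_lt b r' _ hb1
      calc nthDigit b r (i'+1) = ((nthDigit b r (i'+1) : ZMod b)).val :=
            (ZMod.val_cast_of_lt h6).symm
        _ = ((nthDigit b r' (i'+1) : ZMod b)).val := by rw [hz3]
        _ = nthDigit b r' (i'+1) := ZMod.val_cast_of_lt h7
  have recon : ∀ x : ℕ, x < b ^ k → ∑ i ∈ Finset.range k, nthDigit b x (i+1) * b ^ i = x := by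
    intro x hx
    refine (Finset.sum_congr rfl fun i _ => ?_).trans (digit_recon b hb1 k x hx)
    unfold nthDigit
    rw [if_neg (by omega)]
    simp
  calc r = ∑ i ∈ Finset.range k, nthDigit b r (i+1) * b ^ i := (recon r hr).symm
    _ = ∑ i ∈ Finset.range k, nthDigit b r' (i+1) * b ^ i := by
        refine Finset.sum_congr rfl fun i hi => ?_
        simp only [Finset.mem_range] at hi
        rw [digs (i+1) (by omega) (by omega)]
    _ = r' := recon r' hr'

lemma interval_iff (b m k : ℕ) (hb : 2 ≤ b) (hk : k ≤ m) (c : ℕ → ℕ → ℕ)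
    (n s : ℕ) :
    ((s : ℝ) / (b : ℝ) ^ k ≤ nltMap b m c n ∧
      nltMap b m c n ≤ (s : ℝ) / (b : ℝ) ^ k + 1 / (b : ℝ) ^ k - 1 / (b : ℝ) ^ m)
      ↔ dval b (Y b c n) k = s := by
  have hb1 : 1 ≤ b := by omega
  have hY : ∀ i, Y b c n i < b := fun i => Nat.mod_lt _ (by omega)
  set M := dval b (Y b c n) m with hM
  have hMlt : M < b ^ m := dval_lt b hb1 _ m fun i _ _ => hY i
  set t := b ^ (m - k) with ht
  have ht1 : 1 ≤ t := Nat.one_le_pow _ _ (by omega)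
  have hbmk : b ^ m = b ^ k * t := by rw [ht, ← pow_add]; congr 1; omega
  have hdiv : M / t = dval b (Y b c n) k := dval_div b hb1 _ k m hk fun i _ _ => hY i
  have hB : (0:ℝ) < (b:ℝ) := by exact_mod_cast (by omega : 0 < b)
  have hBk : (0:ℝ) < (b:ℝ) ^ k := by positivity
  have hBm : (0:ℝ) < (b:ℝ) ^ m := by positivity
  have hbmkR : (b:ℝ) ^ m = (b:ℝ) ^ k * (t:ℝ) := by
    rw [ht]; push_cast
    rw [← pow_add]; congr 1; omega
  rw [nltMap_eq b m hb1 c n, ← hM]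
  have e1 : (s : ℝ) / (b:ℝ) ^ k = ((s * t : ℕ) : ℝ) / (b:ℝ) ^ m := by
    push_cast
    rw [hbmkR]
    have htR : (0:ℝ) < (t:ℝ) := by exact_mod_cast ht1
    field_simp
  have e2 : (s : ℝ) / (b:ℝ) ^ k + 1 / (b:ℝ) ^ k - 1 / (b:ℝ) ^ m
      = (((s + 1) * t - 1 : ℕ) : ℝ) / (b:ℝ) ^ m := by
    have h1 : (1:ℕ) ≤ (s + 1) * t := by nlinarith
    have htR : (0:ℝ) < (t:ℝ) := by exact_mod_cast ht1
    rw [Nat.cast_sub h1]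
    push_cast
    rw [hbmkR]
    field_simp
  rw [e2, e1, div_le_div_iff_of_pos_right hBm, div_le_div_iff_of_pos_right hBm,
    Nat.cast_le, Nat.cast_le]
  rw [← hdiv]
  have hst : 0 < (s + 1) * t := Nat.mul_pos (by omega) (by omega)
  constructor
  · rintro ⟨h1, h2⟩
    exact Nat.div_eq_of_lt_le h1 (by omega)
  · intro h
    have h1 : M / t * t ≤ M := Nat.div_mul_le_self M t
    have h2 := Nat.div_add_mod M t
    have h3 : M % t < t := Nat.mod_lt _ (by omega)
    have h4 : (s + 1) * t = t * (M / t) + t := by rw [← h]; ring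
    constructor
    · rw [← h]; exact h1
    · omega

lemma existsUnique_mod (t : ℕ) (ht : 0 < t) (a r : ℕ) (hr : r < t) :
    ∃! n, (a ≤ n ∧ n < a + t) ∧ n % t = r := by
  have hd := Nat.div_add_mod a t
  have hu : a % t < t := Nat.mod_lt _ ht
  have uniq : ∀ x y : ℕ, a ≤ x → x < a + t → a ≤ y → y < a + t → x % t = y % t → x = y := by
    intro x y hx1 hx2 hy1 hy2 hxy
    rcases le_total x y with h | h
    · have hdvd : t ∣ y - x := (Nat.modEq_iff_dvd' h).mp hxy
      rcases Nat.eq_zero_or_pos (y - x) with h0 | h0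
      · omega
      · have := Nat.le_of_dvd h0 hdvd; omega
    · have hdvd : t ∣ x - y := (Nat.modEq_iff_dvd' h).mp hxy.symm
      rcases Nat.eq_zero_or_pos (x - y) with h0 | h0
      · omega
      · have := Nat.le_of_dvd h0 hdvd; omega
  have cand : ∃ n, (a ≤ n ∧ n < a + t) ∧ n % t = r := by
    by_cases h : a % t ≤ r
    · exact ⟨t * (a / t) + r, ⟨by omega, by omega⟩, by
        rw [Nat.mul_add_mod, Nat.mod_eq_of_lt hr]⟩
    · refine ⟨t * (a / t) + t + r, ⟨by omega, by omega⟩, ?_⟩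
      rw [show t * (a / t) + t + r = t * (a / t + 1) + r by ring, Nat.mul_add_mod,
        Nat.mod_eq_of_lt hr]
  obtain ⟨n, hn1, hn2⟩ := cand
  exact ⟨n, ⟨hn1, hn2⟩, fun y hy => uniq y n hy.1.1 hy.1.2 hn1.1 hn1.2 (hy.2.trans hn2.symm)⟩

end NLTAux

/-- On any set `A` of `b^k` consecutive integers in `{0,…,b^m−1}`, the NLT map `μ`
hits every interval `[s/b^k, s/b^k + 1/b^k − 1/b^m]`, `s = 0,…,b^k−1`, exactly once. -/
theorem nltMap_equidistributed (b m k : ℕ) (hb : Nat.Prime b) (hm : 1 ≤ m)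
    (hk1 : 1 ≤ k) (hkm : k ≤ m - 1) (c : ℕ → ℕ → ℕ)
    (hc : ∀ i j, c i j < b) (hdiag : ∀ i, 1 ≤ i → i ≤ m → c i i ≠ 0)
    (a : ℕ) (ha : a + b ^ k ≤ b ^ m) :
    ∀ s < b ^ k, ∃! n : ℕ, n ∈ Finset.Ico a (a + b ^ k) ∧
      (s : ℝ) / (b : ℝ) ^ k ≤ nltMap b m c n ∧
      nltMap b m c n ≤ (s : ℝ) / (b : ℝ) ^ k + 1 / (b : ℝ) ^ k - 1 / (b : ℝ) ^ m := by
  intro s hs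
  have hb2 : 2 ≤ b := hb.two_le
  have hkm' : k ≤ m := by omega
  have htpos : 0 < b ^ k := Nat.pow_pos (by omega)
  set H : ℕ → ℕ := fun r => NLTAux.dval b (NLTAux.Y b c r) k with hH
  have hYlt : ∀ n i, NLTAux.Y b c n i < b := fun n i => Nat.mod_lt _ (by omega)
  have hHlt : ∀ r, H r < b ^ k := fun r =>
    NLTAux.dval_lt b (by omega) _ k fun i _ _ => hYlt r i
  have hinj : ∀ r r', r < b ^ k → r' < b ^ k → H r = H r' → r = r' := fun r r' h1 h2 h3 =>
    NLTAux.head_inj b k hb c hc (fun i hi1 hi2 => hdiag i hi1 (by omega)) r r' h1 h2 h3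
  -- surjectivity of H on range (b^k)
  have hsurj : ∃ r, r < b ^ k ∧ H r = s := by
    have hsur := Finset.surj_on_of_inj_on_of_card_le
      (s := Finset.range (b ^ k)) (t := Finset.range (b ^ k))
      (fun r _ => H r) (fun r hr => Finset.mem_range.mpr (hHlt r))
      (fun r r' hr hr' h => hinj r r' (Finset.mem_range.mp hr) (Finset.mem_range.mp hr') h)
      le_rfl
    obtain ⟨r, hr, hrs⟩ := hsur s (Finset.mem_range.mpr hs)
    exact ⟨r, Finset.mem_range.mp hr, hrs.symm⟩
  obtain ⟨r, hrlt, hrs⟩ := hsurj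
  -- equivalence of the interval condition with a congruence condition
  have hequiv : ∀ n : ℕ,
      ((s : ℝ) / (b : ℝ) ^ k ≤ nltMap b m c n ∧
        nltMap b m c n ≤ (s : ℝ) / (b : ℝ) ^ k + 1 / (b : ℝ) ^ k - 1 / (b : ℝ) ^ m)
      ↔ n % b ^ k = r := by
    intro n
    rw [NLTAux.interval_iff b m k hb2 hkm' c n s]
    have hmodeq : NLTAux.dval b (NLTAux.Y b c n) k = H (n % b ^ k) := by
      rw [hH]
      unfold NLTAux.dval
      refine Finset.sum_congr rfl fun i hi => ?_
      simp only [Finset.mem_Icc] at hi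
      congr 1
      unfold NLTAux.Y
      congr 1
      refine Finset.sum_congr rfl fun j hj => ?_
      simp only [Finset.mem_Icc] at hj
      rw [NLTAux.nthDigit_mod b k n (by omega) j hj.1 (by omega)]
    rw [hmodeq]
    constructor
    · intro h
      exact hinj _ _ (Nat.mod_lt n htpos) hrlt (h.trans hrs.symm)
    · intro h
      rw [h, hrs]
  obtain ⟨n₀, hn₀, huniq⟩ := NLTAux.existsUnique_mod (b ^ k) htpos a r hrlt
  refine ⟨n₀, ⟨Finset.mem_Ico.mpr ⟨hn₀.1.1, hn₀.1.2⟩, (hequiv n₀).mpr hn₀.2⟩, ?_⟩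
  rintro n ⟨hmem, hcond⟩
  rw [Finset.mem_Ico] at hmem
  exact huniq n ⟨⟨hmem.1, hmem.2⟩, (hequiv n).mp hcond⟩
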